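/- arXiv:2301.09129 — 4 statements merged into one kernel-verified Lean document; each statement's English description precedes it below -/
import Mathlib

section
/- Let g₀ be the 4×4 complex matrix with diagonal entries 1 and all off-diagonal entries −1. Then (a) g₀² = 4·I₄, so g₀ represents an involution of ℙ³(ℂ); and (b) for all a₁, a₂, a₃, h ∈ ℂ with a₁a₂a₃h ≠ 0 there exists an invertible matrix L ∈ GL(4, ℂ) such that for every x ∈ ℂ⁴ the two vectors g₀ · crem(L · x) and L · Φ_h(x) are linearly dependent over ℂ (i.e. Φ_h is projectively equivalent to the birational map g₀ ∘ crem₃). -/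
noncomputable section

/-- The standard Cremona transformation of `ℙ³` in homogeneous (polynomial) form:
`crem(x)ᵢ = ∏_{j ≠ i} xⱼ`. -/
def crem (x : Fin 4 → ℂ) : Fin 4 → ℂ :=
  ![x 1 * x 2 * x 3, x 0 * x 2 * x 3, x 0 * x 1 * x 3, x 0 * x 1 * x 2]

/-- The KHK discretisation of the Euler top, in homogeneous coordinates. -/
def PhiH (a₁ a₂ a₃ h : ℂ) (x : Fin 4 → ℂ) : Fin 4 → ℂ :=
  ![-(h ^ 2) * x 0 * (a₁ * a₂ * (x 2) ^ 2 + a₁ * a₃ * (x 1) ^ 2 - a₂ * a₃ * (x 0) ^ 2)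
      - 4 * a₁ * h * x 1 * x 2 * x 3 - 4 * x 0 * (x 3) ^ 2,
    -(h ^ 2) * x 1 * (a₁ * a₂ * (x 2) ^ 2 - a₁ * a₃ * (x 1) ^ 2 + a₂ * a₃ * (x 0) ^ 2)
      - 4 * a₂ * h * x 0 * x 2 * x 3 - 4 * x 1 * (x 3) ^ 2,
    h ^ 2 * x 2 * (a₁ * a₂ * (x 2) ^ 2 - a₁ * a₃ * (x 1) ^ 2 - a₂ * a₃ * (x 0) ^ 2)
      - 4 * a₃ * h * x 0 * x 1 * x 3 - 4 * x 2 * (x 3) ^ 2,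
    a₁ * a₂ * a₃ * h ^ 3 * x 0 * x 1 * x 2
      + h ^ 2 * x 3 * (a₁ * a₂ * (x 2) ^ 2 + a₁ * a₃ * (x 1) ^ 2 + a₂ * a₃ * (x 0) ^ 2)
      - 4 * (x 3) ^ 3]

/-- The matrix `g₀`: diagonal entries `1`, off-diagonal entries `-1`. -/
def g₀ : Matrix (Fin 4) (Fin 4) ℂ :=
  !![1, -1, -1, -1;
     -1, 1, -1, -1;
     -1, -1, 1, -1;
     -1, -1, -1, 1]

set_option maxHeartbeats 2000000 in
/-- `g₀` is an involution of `ℙ³` and the KHK discretisation of the Euler top is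
projectively equivalent to the map `g₀ ∘ crem₃`. -/
theorem euler_projectively_equivalent :
    g₀ * g₀ = (4 : ℂ) • (1 : Matrix (Fin 4) (Fin 4) ℂ) ∧
    ∀ a₁ a₂ a₃ h : ℂ, a₁ * a₂ * a₃ * h ≠ 0 →
      ∃ L : Matrix (Fin 4) (Fin 4) ℂ, IsUnit L ∧
        ∀ x : Fin 4 → ℂ, ∃ c d : ℂ, (c ≠ 0 ∨ d ≠ 0) ∧
          c • g₀.mulVec (crem (L.mulVec x)) + d • L.mulVec (PhiH a₁ a₂ a₃ h x) = 0 := by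
  constructor
  · ext i j
    fin_cases i <;> fin_cases j <;>
      norm_num [g₀, Matrix.mul_apply, Fin.sum_univ_succ, Matrix.one_apply, Matrix.vecHead, Matrix.vecTail, Fin.ext_iff]
  · intro a₁ a₂ a₃ h hne
    have ha₁ : a₁ ≠ 0 := fun H => hne (by simp [H])
    have ha₂ : a₂ ≠ 0 := fun H => hne (by simp [H])
    have ha₃ : a₃ ≠ 0 := fun H => hne (by simp [H])
    have hh : h ≠ 0 := fun H => hne (by simp [H])
    obtain ⟨s₁, hs₁⟩ := IsAlgClosed.exists_pow_nat_eq a₁ (n := 2) (by norm_num)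
    obtain ⟨s₂, hs₂⟩ := IsAlgClosed.exists_pow_nat_eq a₂ (n := 2) (by norm_num)
    obtain ⟨s₃, hs₃⟩ := IsAlgClosed.exists_pow_nat_eq a₃ (n := 2) (by norm_num)
    subst hs₁ hs₂ hs₃
    have hs₁' : s₁ ≠ 0 := fun H => ha₁ (by simp [H])
    have hs₂' : s₂ ≠ 0 := fun H => ha₂ (by simp [H])
    have hs₃' : s₃ ≠ 0 := fun H => ha₃ (by simp [H])
    refine ⟨!![h * (s₂ * s₃), h * (s₁ * s₃), -(h * (s₁ * s₂)), 2;
               h * (s₂ * s₃), -(h * (s₁ * s₃)), h * (s₁ * s₂), 2;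
               -(h * (s₂ * s₃)), h * (s₁ * s₃), h * (s₁ * s₂), 2;
               -(h * (s₂ * s₃)), -(h * (s₁ * s₃)), -(h * (s₁ * s₂)), 2], ?_, ?_⟩
    · rw [Matrix.isUnit_iff_isUnit_det, isUnit_iff_ne_zero]
      have hdet : (!![h * (s₂ * s₃), h * (s₁ * s₃), -(h * (s₁ * s₂)), 2;
               h * (s₂ * s₃), -(h * (s₁ * s₃)), h * (s₁ * s₂), 2;
               -(h * (s₂ * s₃)), h * (s₁ * s₃), h * (s₁ * s₂), 2;
               -(h * (s₂ * s₃)), -(h * (s₁ * s₃)), -(h * (s₁ * s₂)), 2] :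
               Matrix (Fin 4) (Fin 4) ℂ).det = -32 * h ^ 3 * (s₁ * s₂ * s₃) ^ 2 := by
        rw [Matrix.det_succ_row_zero]
        simp [Fin.sum_univ_succ, Matrix.det_fin_three, Fin.succAbove]
        ring
      rw [hdet]
      have h1 : s₁ * s₂ * s₃ ≠ 0 := mul_ne_zero (mul_ne_zero hs₁' hs₂') hs₃'
      simp [pow_ne_zero, h1, hh]
    · intro x
      refine ⟨1, -2, Or.inl one_ne_zero, ?_⟩
      funext i
      fin_cases i <;>
       · simp [crem, PhiH, g₀, Matrix.mulVec, dotProduct, Fin.sum_univ_four]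
         ring
end
end

section
/- Among the elements g of the Cremona-cubes group C = {g ∈ PGL₄(ℂ) : g·R ⊆ R}, exactly 192 satisfy g·E ⊆ E (these are the elements of type (B), represented by permutation matrices with signs). Concretely: the number of classes, modulo nonzero scalar matrices, of matrices M ∈ GL(4, ℂ) which map each of the twelve lines ℂ·v, v a representative vector of R, onto such a line, and which in addition map each coordinate line ℂ·eᵢ onto a coordinate line, is 192. -/
/-- The twelve representative vectors of the Reye configuration `R = E ∪ P ∪ Q`. -/
def ReyeVecs : List (Fin 4 → ℂ) :=
  [![1, 0, 0, 0], ![0, 1, 0, 0], ![0, 0, 1, 0], ![0, 0, 0, 1],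
   ![1, -1, -1, -1], ![-1, 1, -1, -1], ![-1, -1, 1, -1], ![-1, -1, -1, 1],
   ![1, -1, -1, 1], ![-1, 1, -1, 1], ![1, 1, -1, -1], ![1, 1, 1, 1]]

/-- An invertible matrix representing an element of the Cremona-cubes group of type (B):
it maps each of the twelve Reye lines to such a line, and in addition maps each
coordinate line to a coordinate line. -/
def IsTypeB (M : Matrix (Fin 4) (Fin 4) ℂ) : Prop :=
  IsUnit M ∧ (∀ v ∈ ReyeVecs, ∃ w ∈ ReyeVecs, ∃ c : ℂ, c ≠ 0 ∧ M.mulVec v = c • w) ∧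
    ∀ i : Fin 4, ∃ j : Fin 4, ∃ c : ℂ, c ≠ 0 ∧
      M.mulVec (Pi.single i 1) = c • (Pi.single j 1 : Fin 4 → ℂ)

lemma pm_mul {a b : ℂ} (ha : a = 1 ∨ a = -1) (hb : b = 1 ∨ b = -1) :
    a * b = 1 ∨ a * b = -1 := by
  rcases ha with rfl | rfl <;> rcases hb with rfl | rfl <;> norm_num

lemma mem_reye_single (j : Fin 4) : (Pi.single j 1 : Fin 4 → ℂ) ∈ ReyeVecs := by
  have h0 : (Pi.single (0 : Fin 4) 1 : Fin 4 → ℂ) = ![1,0,0,0] := by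
    funext i; fin_cases i <;> simp [Pi.single_apply]
  have h1 : (Pi.single (1 : Fin 4) 1 : Fin 4 → ℂ) = ![0,1,0,0] := by
    funext i; fin_cases i <;> simp [Pi.single_apply]
  have h2 : (Pi.single (2 : Fin 4) 1 : Fin 4 → ℂ) = ![0,0,1,0] := by
    funext i; fin_cases i <;> simp [Pi.single_apply]
  have h3 : (Pi.single (3 : Fin 4) 1 : Fin 4 → ℂ) = ![0,0,0,1] := by
    funext i; fin_cases i <;> simp [Pi.single_apply]
  fin_cases j <;> simp [ReyeVecs] <;> tauto

lemma sign_vec (u : Fin 4 → ℂ) (h : ∀ i, u i = 1 ∨ u i = -1) :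
    ∃ w ∈ ReyeVecs, ∃ k : ℂ, k ≠ 0 ∧ u = k • w := by
  have hu : u = ![u 0, u 1, u 2, u 3] := by funext i; fin_cases i <;> rfl
  rw [hu]
  rcases h 0 with h0 | h0 <;> rcases h 1 with h1 | h1 <;> rcases h 2 with h2 | h2 <;>
    rcases h 3 with h3 | h3 <;> rw [h0, h1, h2, h3]
  exacts [⟨![1, 1, 1, 1], by simp [ReyeVecs], 1, by norm_num, by funext i; fin_cases i <;> norm_num⟩,
    ⟨![-1, -1, -1, 1], by simp [ReyeVecs], -1, by norm_num, by funext i; fin_cases i <;> norm_num⟩,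
    ⟨![-1, -1, 1, -1], by simp [ReyeVecs], -1, by norm_num, by funext i; fin_cases i <;> norm_num⟩,
    ⟨![1, 1, -1, -1], by simp [ReyeVecs], 1, by norm_num, by funext i; fin_cases i <;> norm_num⟩,
    ⟨![-1, 1, -1, -1], by simp [ReyeVecs], -1, by norm_num, by funext i; fin_cases i <;> norm_num⟩,
    ⟨![-1, 1, -1, 1], by simp [ReyeVecs], -1, by norm_num, by funext i; fin_cases i <;> norm_num⟩,
    ⟨![1, -1, -1, 1], by simp [ReyeVecs], 1, by norm_num, by funext i; fin_cases i <;> norm_num⟩,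
    ⟨![1, -1, -1, -1], by simp [ReyeVecs], 1, by norm_num, by funext i; fin_cases i <;> norm_num⟩,
    ⟨![1, -1, -1, -1], by simp [ReyeVecs], -1, by norm_num, by funext i; fin_cases i <;> norm_num⟩,
    ⟨![1, -1, -1, 1], by simp [ReyeVecs], -1, by norm_num, by funext i; fin_cases i <;> norm_num⟩,
    ⟨![-1, 1, -1, 1], by simp [ReyeVecs], 1, by norm_num, by funext i; fin_cases i <;> norm_num⟩,
    ⟨![-1, 1, -1, -1], by simp [ReyeVecs], 1, by norm_num, by funext i; fin_cases i <;> norm_num⟩,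
    ⟨![1, 1, -1, -1], by simp [ReyeVecs], -1, by norm_num, by funext i; fin_cases i <;> norm_num⟩,
    ⟨![-1, -1, 1, -1], by simp [ReyeVecs], 1, by norm_num, by funext i; fin_cases i <;> norm_num⟩,
    ⟨![-1, -1, -1, 1], by simp [ReyeVecs], 1, by norm_num, by funext i; fin_cases i <;> norm_num⟩,
    ⟨![1, 1, 1, 1], by simp [ReyeVecs], -1, by norm_num, by funext i; fin_cases i <;> norm_num⟩]

open Matrix in
noncomputable def Smat (σ : Equiv.Perm (Fin 4)) (ε : Fin 4 → ℂ) : Matrix (Fin 4) (Fin 4) ℂ :=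
  Matrix.of fun i j => if σ j = i then ε j else 0

lemma Smat_apply (σ : Equiv.Perm (Fin 4)) (ε : Fin 4 → ℂ) (i j : Fin 4) :
    Smat σ ε i j = if σ j = i then ε j else 0 := rfl

lemma Smat_mulVec_apply (σ : Equiv.Perm (Fin 4)) (ε : Fin 4 → ℂ) (v : Fin 4 → ℂ) (i : Fin 4) :
    (Smat σ ε).mulVec v i = ε (σ.symm i) * v (σ.symm i) := by
  rw [Matrix.mulVec, dotProduct]
  rw [Finset.sum_eq_single (σ.symm i)]
  · simp [Smat_apply]
  · intro j _ hj
    rw [Smat_apply, if_neg, zero_mul]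
    intro hc; exact hj (by rw [← hc, Equiv.symm_apply_apply])
  · simp

lemma Smat_mulVec_single (σ : Equiv.Perm (Fin 4)) (ε : Fin 4 → ℂ) (i : Fin 4) :
    (Smat σ ε).mulVec (Pi.single i 1) = ε i • (Pi.single (σ i) 1 : Fin 4 → ℂ) := by
  funext k
  rw [Smat_mulVec_apply, Pi.smul_apply, smul_eq_mul]
  rcases eq_or_ne k (σ i) with rfl | hk
  · rw [Equiv.symm_apply_apply]; simp
  · rw [Pi.single_apply, Pi.single_apply,
      if_neg (fun h => hk (by rw [← h, Equiv.apply_symm_apply])), if_neg hk, mul_zero, mul_zero]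

lemma Smat_det_ne (σ : Equiv.Perm (Fin 4)) (ε : Fin 4 → ℂ) (hε : ∀ j, ε j ≠ 0) :
    (Smat σ ε).det ≠ 0 := by
  have h : Smat σ ε = (Matrix.diagonal ε).submatrix σ.symm id := by
    funext i j
    rw [Smat_apply, Matrix.submatrix_apply, id, Matrix.diagonal_apply]
    rcases eq_or_ne (σ j) i with rfl | hne
    · rw [if_pos rfl, Equiv.symm_apply_apply, if_pos rfl]
    · rw [if_neg hne, if_neg fun h => hne (by rw [← h, Equiv.apply_symm_apply])]
  rw [h, Matrix.det_permute, Matrix.det_diagonal]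
  refine mul_ne_zero ?_ (Finset.prod_ne_zero_iff.2 fun j _ => hε j)
  simp [Int.cast_eq_zero (α := ℂ)]

lemma reye_pm (w : Fin 4 → ℂ) (hw : w ∈ ReyeVecs) (h0 : ∀ i, w i ≠ 0) :
    ∀ i, w i = 1 ∨ w i = -1 := by
  simp only [ReyeVecs, List.mem_cons, List.not_mem_nil, or_false] at hw
  rcases hw with rfl | rfl | rfl | rfl | hw'
  · exact absurd (by norm_num : (![1,0,0,0] : Fin 4 → ℂ) 1 = 0) (h0 1)
  · exact absurd (by norm_num : (![0,1,0,0] : Fin 4 → ℂ) 0 = 0) (h0 0)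
  · exact absurd (by norm_num : (![0,0,1,0] : Fin 4 → ℂ) 0 = 0) (h0 0)
  · exact absurd (by norm_num : (![0,0,0,1] : Fin 4 → ℂ) 0 = 0) (h0 0)
  · rcases hw' with rfl | rfl | rfl | rfl | rfl | rfl | rfl | rfl <;>
      (intro i; fin_cases i <;> norm_num)

lemma e_eq0 : (![1,0,0,0] : Fin 4 → ℂ) = Pi.single 0 1 := by
  funext i; fin_cases i <;> simp [Pi.single_apply]
lemma e_eq1 : (![0,1,0,0] : Fin 4 → ℂ) = Pi.single 1 1 := by
  funext i; fin_cases i <;> simp [Pi.single_apply]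
lemma e_eq2 : (![0,0,1,0] : Fin 4 → ℂ) = Pi.single 2 1 := by
  funext i; fin_cases i <;> simp [Pi.single_apply]
lemma e_eq3 : (![0,0,0,1] : Fin 4 → ℂ) = Pi.single 3 1 := by
  funext i; fin_cases i <;> simp [Pi.single_apply]

lemma isTypeB_Smat (σ : Equiv.Perm (Fin 4)) (ε : Fin 4 → ℂ)
    (hε : ∀ j, ε j = 1 ∨ ε j = -1) : IsTypeB (Smat σ ε) := by
  have hne : ∀ j, ε j ≠ 0 := fun j => by rcases hε j with h | h <;> rw [h] <;> norm_num
  refine ⟨?_, ?_, fun i => ⟨σ i, ε i, hne i, Smat_mulVec_single σ ε i⟩⟩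
  · rw [Matrix.isUnit_iff_isUnit_det, isUnit_iff_ne_zero]
    exact Smat_det_ne σ ε hne
  · intro v hv
    fin_cases hv
    · exact ⟨Pi.single (σ 0) 1, mem_reye_single _, ε 0, hne 0,
        by rw [e_eq0, Smat_mulVec_single]⟩
    · exact ⟨Pi.single (σ 1) 1, mem_reye_single _, ε 1, hne 1,
        by rw [e_eq1, Smat_mulVec_single]⟩
    · exact ⟨Pi.single (σ 2) 1, mem_reye_single _, ε 2, hne 2,
        by rw [e_eq2, Smat_mulVec_single]⟩
    · exact ⟨Pi.single (σ 3) 1, mem_reye_single _, ε 3, hne 3,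
        by rw [e_eq3, Smat_mulVec_single]⟩
    all_goals
      refine sign_vec _ fun i => ?_
    all_goals
      rw [Smat_mulVec_apply]
    all_goals
      refine pm_mul (hε _) ?_
    all_goals
      generalize σ.symm i = j
    all_goals
      fin_cases j <;> norm_num

lemma typeB_eq (M : Matrix (Fin 4) (Fin 4) ℂ) (h : IsTypeB M) :
    ∃ (σ : Equiv.Perm (Fin 4)) (ε : Fin 4 → ℂ), (∀ j, ε j = 1 ∨ ε j = -1) ∧ ε 0 = 1 ∧
      ∃ k : ℂ, k ≠ 0 ∧ M = k • Smat σ ε := by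
  obtain ⟨hu, h2, h3⟩ := h
  choose f c hc hM using h3
  have hinj : Function.Injective M.mulVec := Matrix.mulVec_injective_iff_isUnit.2 hu
  have hfinj : Function.Injective f := by
    intro i1 i2 hf
    by_contra hne
    have e1 : M.mulVec (c i2 • (Pi.single i1 1 : Fin 4 → ℂ)) =
        M.mulVec (c i1 • (Pi.single i2 1 : Fin 4 → ℂ)) := by
      rw [Matrix.mulVec_smul, Matrix.mulVec_smul, hM, hM, hf, smul_comm]
    have e2 := hinj e1
    have := congrFun e2 i1
    rw [Pi.smul_apply, Pi.smul_apply, Pi.single_eq_same, Pi.single_apply,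
      if_neg hne] at this
    simp only [smul_eq_mul, mul_one, mul_zero] at this
    exact hc i2 this
  let σ : Equiv.Perm (Fin 4) := Equiv.ofBijective f ((Finite.injective_iff_bijective).1 hfinj)
  have hσ : ∀ j, σ j = f j := fun j => rfl
  have Mcol : ∀ i j, M i j = if σ j = i then c j else 0 := by
    intro i j
    have h0 := congrFun (hM j) i
    rw [Matrix.mulVec_single] at h0
    have h1 : M i j * 1 = (c j • (Pi.single (f j) 1 : Fin 4 → ℂ)) i := h0
    rw [mul_one] at h1
    rw [h1, Pi.smul_apply, Pi.single_apply, smul_eq_mul, hσ]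
    rcases eq_or_ne (f j) i with h' | h'
    · rw [if_pos h'.symm, if_pos h', mul_one]
    · rw [if_neg (fun hh => h' hh.symm), if_neg h', mul_zero]
  obtain ⟨w, hw, k, hk, hkw⟩ := h2 ![1,1,1,1] (by simp [ReyeVecs])
  have hMv : ∀ i, M.mulVec ![1,1,1,1] i = c (σ.symm i) := by
    intro i
    rw [Matrix.mulVec, dotProduct, Finset.sum_eq_single (σ.symm i)]
    · rw [Mcol, if_pos (Equiv.apply_symm_apply σ i)]
      generalize (σ.symm i : Fin 4) = j
      fin_cases j <;> norm_num
    · intro j _ hj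
      rw [Mcol, if_neg fun hcon => hj (by rw [← hcon, Equiv.symm_apply_apply]), zero_mul]
    · simp
  have hcw : ∀ i, c (σ.symm i) = k * w i := by
    intro i
    rw [← hMv i, hkw]; rfl
  have hw0 : ∀ i, w i ≠ 0 := by
    intro i hwi
    exact hc (σ.symm i) (by rw [hcw i, hwi, mul_zero])
  have hwpm := reye_pm w hw hw0
  set ε' : Fin 4 → ℂ := fun j => w (σ j) with hε'
  have hε'pm : ∀ j, ε' j = 1 ∨ ε' j = -1 := fun j => hwpm (σ j)
  have hcj : ∀ j, c j = k * ε' j := by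
    intro j
    have := hcw (σ j)
    rwa [Equiv.symm_apply_apply] at this
  have hMS : M = k • Smat σ ε' := by
    funext i j
    rw [Matrix.smul_apply, smul_eq_mul, Smat_apply, Mcol]
    rcases eq_or_ne (σ j) i with h' | h'
    · rw [if_pos h', if_pos h', hcj]
    · rw [if_neg h', if_neg h', mul_zero]
  set s : ℂ := ε' 0 with hs
  have hs2 : s * s = 1 := by rcases hε'pm 0 with h' | h' <;> rw [← hs] at h' <;>
    rw [h'] <;> norm_num
  refine ⟨σ, fun j => s * ε' j, fun j => pm_mul (hε'pm 0) (hε'pm j), hs2, k * s, ?_, ?_⟩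
  · exact mul_ne_zero hk (fun h' => by rw [h', mul_zero] at hs2; exact zero_ne_one hs2)
  · rw [hMS]
    funext i j
    simp only [Matrix.smul_apply, smul_eq_mul, Smat_apply]
    rcases eq_or_ne (σ j) i with h' | h'
    · rw [if_pos h', if_pos h',
        show k * s * (s * ε' j) = k * ε' j * (s * s) by ring, hs2, mul_one]
    · rw [if_neg h', if_neg h', mul_zero, mul_zero]

lemma Smat_unique (σ σ' : Equiv.Perm (Fin 4)) (ε ε' : Fin 4 → ℂ)
    (hε0 : ε 0 = 1) (hε0' : ε' 0 = 1) (hne' : ∀ j, ε' j ≠ 0)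
    (k : ℂ) (hk : k ≠ 0) (h : Smat σ ε = k • Smat σ' ε') : σ = σ' ∧ ε = ε' := by
  have key : ∀ j, σ j = σ' j ∧ ε j = k * ε' j := by
    intro j
    have h1 := congrFun (congrFun h (σ' j)) j
    rw [Matrix.smul_apply, Smat_apply, Smat_apply, if_pos rfl, smul_eq_mul] at h1
    rcases eq_or_ne (σ j) (σ' j) with h' | h'
    · rw [if_pos h'] at h1; exact ⟨h', h1⟩
    · rw [if_neg h'] at h1
      exact absurd h1.symm (mul_ne_zero hk (hne' j))
  have hk1 : k = 1 := by
    have := (key 0).2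
    rw [hε0, hε0', mul_one] at this
    exact this.symm
  exact ⟨Equiv.ext fun j => (key j).1, funext fun j => by rw [(key j).2, hk1, one_mul]⟩

noncomputable def efun (b : Fin 3 → Bool) : Fin 4 → ℂ :=
  ![1, if b 0 then 1 else -1, if b 1 then 1 else -1, if b 2 then 1 else -1]

lemma efun_pm (b : Fin 3 → Bool) : ∀ j, efun b j = 1 ∨ efun b j = -1 := by
  intro j
  fin_cases j
  · exact Or.inl rfl
  · cases h : b 0 <;> simp [efun, h]
  · cases h : b 1 <;> simp [efun, h]
  · cases h : b 2 <;> simp [efun, h]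

lemma efun_zero (b : Fin 3 → Bool) : efun b 0 = 1 := rfl

lemma ite_pm_inj {x y : Bool} (h : (if x then (1:ℂ) else -1) = (if y then 1 else -1)) :
    x = y := by
  cases x <;> cases y <;> first | rfl | (exfalso; norm_num at h)

lemma efun_inj : Function.Injective efun := by
  intro b b' h
  funext i
  fin_cases i
  · exact ite_pm_inj (by simpa [efun] using congrFun h 1)
  · exact ite_pm_inj (by simpa [efun] using congrFun h 2)
  · exact ite_pm_inj (by simpa [efun] using congrFun h 3)

/-- Exactly 192 elements of the Cremona-cubes group satisfy `g·E ⊆ E` (the elements of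
type (B), represented by permutation matrices with signs): the classes, modulo nonzero
scalars, of such matrices form a set of cardinality 192. -/
theorem cremonaCubes_typeB_card :
    Nat.card (Quot (fun (M N : {M : Matrix (Fin 4) (Fin 4) ℂ // IsTypeB M}) =>
      ∃ c : ℂ, c ≠ 0 ∧ (N : Matrix (Fin 4) (Fin 4) ℂ) = c • (M : Matrix (Fin 4) (Fin 4) ℂ)))
      = 192 := by
  set R : {M : Matrix (Fin 4) (Fin 4) ℂ // IsTypeB M} →
      {M : Matrix (Fin 4) (Fin 4) ℂ // IsTypeB M} → Prop := fun M N =>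
      ∃ c : ℂ, c ≠ 0 ∧ (N : Matrix (Fin 4) (Fin 4) ℂ) = c • (M : Matrix (Fin 4) (Fin 4) ℂ)
    with hR
  have requiv : Equivalence R := by
    constructor
    · exact fun M => ⟨1, one_ne_zero, (one_smul _ _).symm⟩
    · rintro M N ⟨c, hc, h⟩
      exact ⟨c⁻¹, inv_ne_zero hc, by rw [h, smul_smul, inv_mul_cancel₀ hc, one_smul]⟩
    · rintro M N P ⟨c, hc, h⟩ ⟨d, hd, h'⟩
      exact ⟨d * c, mul_ne_zero hd hc, by rw [h', h, smul_smul]⟩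
  let F : Equiv.Perm (Fin 4) × (Fin 3 → Bool) → Quot R := fun p =>
    Quot.mk R ⟨Smat p.1 (efun p.2), isTypeB_Smat _ _ (efun_pm p.2)⟩
  have hbij : Function.Bijective F := by
    constructor
    · intro p q h
      have hrel := (requiv.eqvGen_iff).1 (Quot.eqvGen_exact h)
      obtain ⟨c, hc, heq⟩ := hrel
      have heq' : Smat q.1 (efun q.2) = c • Smat p.1 (efun p.2) := heq
      have hne : ∀ j, efun p.2 j ≠ 0 := fun j => by
        rcases efun_pm p.2 j with h' | h' <;> rw [h'] <;> norm_num
      obtain ⟨hσ, hε⟩ := Smat_unique q.1 p.1 (efun q.2) (efun p.2)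
        (efun_zero _) (efun_zero _) hne c hc heq'
      exact Prod.ext hσ.symm (efun_inj hε.symm)
    · intro x
      induction x using Quot.ind with
      | _ m =>
        obtain ⟨M, hM⟩ := m
        obtain ⟨σ, ε, hpm, hε0, k, hk, hMeq⟩ := typeB_eq M hM
        classical
        have hb : ∃ b : Fin 3 → Bool, efun b = ε := by
          refine ⟨![if ε 1 = 1 then true else false, if ε 2 = 1 then true else false,
            if ε 3 = 1 then true else false], ?_⟩
          funext j
          fin_cases j
          · exact hε0.symm
          · rcases hpm 1 with h | h <;>
              simp [efun, h, (by norm_num : (-1 : ℂ) ≠ 1)]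
          · rcases hpm 2 with h | h <;>
              simp [efun, h, (by norm_num : (-1 : ℂ) ≠ 1)]
          · rcases hpm 3 with h | h <;>
              simp [efun, h, (by norm_num : (-1 : ℂ) ≠ 1)]
        obtain ⟨b, hbε⟩ := hb
        exact ⟨(σ, b), Quot.sound ⟨k, hk,
          show M = k • Smat σ (efun b) by rw [hbε]; exact hMeq⟩⟩
  rw [← Nat.card_eq_of_bijective F hbij, Nat.card_eq_fintype_card,
    Fintype.card_prod, Fintype.card_perm, Fintype.card_fun]
  norm_num [Nat.factorial]
end

section
/- Let σ₁, σ₂ be permutations of Fin 4. Let M be the free ℤ-module with basis H, E₁,…,E₄, P₁,…,P₄, and let f : M → M be the ℤ-linear map defined on the basis by f(H) = 3H − 2(P₁+P₂+P₃+P₄), f(Eᵢ) = H − Σ_{j ≠ i} P_{σ₁(j)} for each i, and f(Pᵢ) = E_{σ₂(i)} for each i. Then for every natural number n, fⁿ(H) = (2n² + 1)·H − n(n−1)·(E₁+E₂+E₃+E₄) − n(n+1)·(P₁+P₂+P₃+P₄). In particular the degree sequence of the map Φ = g∘crem₃ for g of type (A) is dₙ = 2n² + 1, so Φ is integrable according to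 the algebraic entropy. -/
noncomputable section

/-- Index type for the basis `H, E₁,…,E₄, P₁,…,P₄`. -/
abbrev IdxA := Unit ⊕ Fin 4 ⊕ Fin 4

/-- The free ℤ-module with basis `H, E₁,…,E₄, P₁,…,P₄`. -/
abbrev ModA := IdxA → ℤ

/-- The basis vector `H` (pullback of the hyperplane class). -/
def Hc : ModA := Pi.single (Sum.inl ()) 1

/-- The basis vectors `Eᵢ` (exceptional divisors over the coordinate points). -/
def Ec (i : Fin 4) : ModA := Pi.single (Sum.inr (Sum.inl i)) 1

/-- The basis vectors `Pᵢ` (exceptional divisors over the points `pᵢ`). -/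
def Pc (i : Fin 4) : ModA := Pi.single (Sum.inr (Sum.inr i)) 1

/-- The action on cohomology of a map `Φ = g∘crem₃` with `g` of type (A): for every `n`,
`fⁿ(H) = (2n²+1)H − n(n−1)(E₁+⋯+E₄) − n(n+1)(P₁+⋯+P₄)`; in particular the degree
sequence is `dₙ = 2n²+1` and `Φ` is integrable according to the algebraic entropy. -/
theorem typeA_degree_growth (σ₁ σ₂ : Equiv.Perm (Fin 4)) (f : Module.End ℤ ModA)
    (hH : f Hc = 3 • Hc - 2 • ∑ j : Fin 4, Pc j)
    (hE : ∀ i : Fin 4, f (Ec i) = Hc - ∑ j ∈ Finset.univ.filter (· ≠ i), Pc (σ₁ j))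
    (hP : ∀ i : Fin 4, f (Pc i) = Ec (σ₂ i)) :
    ∀ n : ℕ, (f ^ n) Hc =
      (2 * (n : ℤ) ^ 2 + 1) • Hc - ((n : ℤ) * ((n : ℤ) - 1)) • ∑ j : Fin 4, Ec j
        - ((n : ℤ) * ((n : ℤ) + 1)) • ∑ j : Fin 4, Pc j := by

  have hT : ∑ j : Fin 4, Pc (σ₁ j) = ∑ j : Fin 4, Pc j := Equiv.sum_comp σ₁ Pc
  have hSP : f (∑ j : Fin 4, Pc j) = ∑ j : Fin 4, Ec j := by
    rw [map_sum]
    simp_rw [hP]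
    exact Equiv.sum_comp σ₂ Ec
  have hSE : f (∑ j : Fin 4, Ec j) = (4 : ℤ) • Hc - (3 : ℤ) • ∑ j : Fin 4, Pc j := by
    rw [map_sum]
    simp_rw [hE, Finset.filter_ne', Finset.sum_erase_eq_sub (Finset.mem_univ _), hT]
    rw [Finset.sum_sub_distrib, Finset.sum_sub_distrib]
    simp only [Finset.sum_const, Finset.card_univ, Fintype.card_fin, hT]
    show (4 : ℕ) • Hc - ((4:ℕ) • ∑ j : Fin 4, Pc j - ∑ j : Fin 4, Pc j) = _
    module
  intro n
  induction n with
  | zero => simp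
  | succ n ih =>
    rw [pow_succ', Module.End.mul_apply, ih, map_sub, map_sub, map_smul, map_smul,
      map_smul, hH, hSE, hSP]
    push_cast
    module
end
end

section
/- Let A be a symmetric 4×4 complex matrix such that vᵀAv = 0 for each of the twelve vectors e₁, e₂, e₃, e₄, p₁, p₂, p₃, p₄, q₁, q₂, q₃, q₄. Then A = 0. Equivalently, no nonzero quadric of ℙ³(ℂ) passes through all twelve points of the Reye configuration R; in particular, for a map Φ = g∘crem₃ with g of type (C) there is no positive-dimensional covariant linear system of quadrics. -/
open Matrix

/-- No nonzero quadric of `ℙ³(ℂ)` passes through all twelve points of the Reye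
configuration: a symmetric 4×4 matrix whose quadratic form vanishes on all twelve
representative vectors is zero. -/
theorem no_quadric_through_Reye (A : Matrix (Fin 4) (Fin 4) ℂ) (hA : A.IsSymm)
    (hv : ∀ v ∈ ReyeVecs, v ⬝ᵥ A.mulVec v = 0) :
    A = 0 := by
  have h0 := hv ![1, 0, 0, 0] (by simp [ReyeVecs])
  have h1 := hv ![0, 1, 0, 0] (by simp [ReyeVecs])
  have h2 := hv ![0, 0, 1, 0] (by simp [ReyeVecs])
  have h3 := hv ![0, 0, 0, 1] (by simp [ReyeVecs])
  have h4 := hv ![1, -1, -1, -1] (by simp [ReyeVecs])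
  have h5 := hv ![-1, 1, -1, -1] (by simp [ReyeVecs])
  have h6 := hv ![-1, -1, 1, -1] (by simp [ReyeVecs])
  have h7 := hv ![-1, -1, -1, 1] (by simp [ReyeVecs])
  have h8 := hv ![1, -1, -1, 1] (by simp [ReyeVecs])
  have h10 := hv ![1, 1, -1, -1] (by simp [ReyeVecs])
  have h11 := hv ![1, 1, 1, 1] (by simp [ReyeVecs])
  simp only [dotProduct, mulVec, Fin.sum_univ_four, Matrix.cons_val_zero,
    Matrix.cons_val_one, Matrix.head_cons, Matrix.cons_val_two, Matrix.tail_cons,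
    Matrix.cons_val_three] at h0 h1 h2 h3 h4 h5 h6 h7 h8 h10 h11
  have hs01 : A 1 0 = A 0 1 := hA.apply 0 1
  have hs02 : A 2 0 = A 0 2 := hA.apply 0 2
  have hs03 : A 3 0 = A 0 3 := hA.apply 0 3
  have hs12 : A 2 1 = A 1 2 := hA.apply 1 2
  have hs13 : A 3 1 = A 1 3 := hA.apply 1 3
  have hs23 : A 3 2 = A 2 3 := hA.apply 2 3
  ext i j
  fin_cases i <;> fin_cases j <;> simp only [Matrix.zero_apply]
  · show A 0 0 = 0
    linear_combination h0
  · show A 0 1 = 0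
    linear_combination (-1/8 : ℂ)*h4 + (-1/8 : ℂ)*h5 + (1/8 : ℂ)*h10 + (1/8 : ℂ)*h11 + (-1/2 : ℂ)*hs01
  · show A 0 2 = 0
    linear_combination (1/8 : ℂ)*h5 + (1/8 : ℂ)*h7 + (-1/8 : ℂ)*h8 + (-1/8 : ℂ)*h10 + (-1/2 : ℂ)*hs02
  · show A 0 3 = 0
    linear_combination (-1/8 : ℂ)*h4 + (-1/8 : ℂ)*h7 + (1/8 : ℂ)*h8 + (1/8 : ℂ)*h11 + (-1/2 : ℂ)*hs03
  · show A 1 0 = 0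
    linear_combination (-1/8 : ℂ)*h4 + (-1/8 : ℂ)*h5 + (1/8 : ℂ)*h10 + (1/8 : ℂ)*h11 + (1/2 : ℂ)*hs01
  · show A 1 1 = 0
    linear_combination h1
  · show A 1 2 = 0
    linear_combination (-1/8 : ℂ)*h5 + (-1/8 : ℂ)*h6 + (1/8 : ℂ)*h8 + (1/8 : ℂ)*h11 + (-1/2 : ℂ)*hs12
  · show A 1 3 = 0
    linear_combination (1/8 : ℂ)*h4 + (1/8 : ℂ)*h6 + (-1/8 : ℂ)*h8 + (-1/8 : ℂ)*h10 + (-1/2 : ℂ)*hs13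
  · show A 2 0 = 0
    linear_combination (1/8 : ℂ)*h5 + (1/8 : ℂ)*h7 + (-1/8 : ℂ)*h8 + (-1/8 : ℂ)*h10 + (1/2 : ℂ)*hs02
  · show A 2 1 = 0
    linear_combination (-1/8 : ℂ)*h5 + (-1/8 : ℂ)*h6 + (1/8 : ℂ)*h8 + (1/8 : ℂ)*h11 + (1/2 : ℂ)*hs12
  · show A 2 2 = 0
    linear_combination h2
  · show A 2 3 = 0
    linear_combination (-1/8 : ℂ)*h6 + (-1/8 : ℂ)*h7 + (1/8 : ℂ)*h10 + (1/8 : ℂ)*h11 + (-1/2 : ℂ)*hs23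
  · show A 3 0 = 0
    linear_combination (-1/8 : ℂ)*h4 + (-1/8 : ℂ)*h7 + (1/8 : ℂ)*h8 + (1/8 : ℂ)*h11 + (1/2 : ℂ)*hs03
  · show A 3 1 = 0
    linear_combination (1/8 : ℂ)*h4 + (1/8 : ℂ)*h6 + (-1/8 : ℂ)*h8 + (-1/8 : ℂ)*h10 + (1/2 : ℂ)*hs13
  · show A 3 2 = 0
    linear_combination (-1/8 : ℂ)*h6 + (-1/8 : ℂ)*h7 + (1/8 : ℂ)*h10 + (1/8 : ℂ)*h11 + (1/2 : ℂ)*hs23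
  · show A 3 3 = 0
    linear_combination h3
end
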